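/- arXiv:1110.6036 — 6 statements merged into one kernel-verified Lean document; each statement's English description precedes it below -/
import Mathlib

section
/- A configuration σ is a local minimum of H with respect to the alternate-dynamics neighborhood structure (where neighbors are configurations differing on a subset of one sublattice) if and only if σ is a local minimum with respect to the single-spin-flip neighborhood structure (where neighbors differ at exactly one site). -/
open Finset

abbrev Site (L M : ℕ) := ZMod (2*L) × ZMod (2*M)

abbrev Config (L M : ℕ) := Site L M → Bool

def spin (b : Bool) : ℤ := if b then 1 else -1

def flipC {L M : ℕ} (σ : Config L M) (I : Finset (Site L M)) : Config L M :=
  fun x => if x ∈ I then !(σ x) else σ x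

noncomputable def ham {L M : ℕ} [NeZero L] [NeZero M] (J h : ℝ) (σ : Config L M) : ℝ :=
  -(J/2) * ∑ x : Site L M,
      ((spin (σ x) * spin (σ (x + (1,0))) + spin (σ x) * spin (σ (x + (0,1))) : ℤ) : ℝ)
    - (h/2) * ∑ x : Site L M, ((spin (σ x) : ℤ) : ℝ)

def evens (L M : ℕ) [NeZero L] [NeZero M] : Finset (Site L M) :=
  univ.filter fun x => Even (x.1.val + x.2.val)

def odds (L M : ℕ) [NeZero L] [NeZero M] : Finset (Site L M) :=
  univ.filter fun x => ¬ Even (x.1.val + x.2.val)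

def adj {L M : ℕ} (x y : Site L M) : Prop :=
  y = x + (1,0) ∨ x = y + (1,0) ∨ y = x + (0,1) ∨ x = y + (0,1)
/-- Neighbor for the alternate dynamics: configurations differing on a nonempty subset
of one sublattice. -/
def altNbr {L M : ℕ} [NeZero L] [NeZero M] (σ η : Config L M) : Prop :=
  ∃ I : Finset (Site L M), I.Nonempty ∧ (I ⊆ evens L M ∨ I ⊆ odds L M) ∧ η = flipC σ I

namespace AuxLoc

variable {L M : ℕ} [NeZero L] [NeZero M]

def eps (I : Finset (Site L M)) (z : Site L M) : ℤ := if z ∈ I then -1 else 1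

lemma spin_flip (σ : Config L M) (I : Finset (Site L M)) (z : Site L M) :
    spin (flipC σ I z) = eps I z * spin (σ z) := by
  by_cases hz : z ∈ I <;> cases hσ : σ z <;> simp [flipC, eps, spin, hz, hσ]

def Indep (I : Finset (Site L M)) : Prop :=
  ∀ y : Site L M, ¬(y ∈ I ∧ y + (1,0) ∈ I) ∧ ¬(y ∈ I ∧ y + (0,1) ∈ I)

lemma eps_mul {I : Finset (Site L M)} {y y' : Site L M} (hne : ¬(y ∈ I ∧ y' ∈ I)) :
    eps I y * eps I y' = (eps I y - 1) + (eps I y' - 1) + 1 := by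
  by_cases h1 : y ∈ I <;> by_cases h2 : y' ∈ I <;> simp [eps, h1, h2] <;> tauto

def S1 (σ : Config L M) : ℤ :=
  ∑ y : Site L M, (spin (σ y) * spin (σ (y + (1,0))) + spin (σ y) * spin (σ (y + (0,1))))

def S2 (σ : Config L M) : ℤ := ∑ y : Site L M, spin (σ y)

def d1 (σ : Config L M) (I : Finset (Site L M)) : ℤ :=
  ∑ y : Site L M,
    (((eps I y - 1) + (eps I (y + (1,0)) - 1)) * (spin (σ y) * spin (σ (y + (1,0)))) +
     ((eps I y - 1) + (eps I (y + (0,1)) - 1)) * (spin (σ y) * spin (σ (y + (0,1)))))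

def d2 (σ : Config L M) (I : Finset (Site L M)) : ℤ :=
  ∑ y : Site L M, (eps I y - 1) * spin (σ y)

lemma S1_flip (σ : Config L M) {I : Finset (Site L M)} (hI : Indep I) :
    S1 (flipC σ I) = S1 σ + d1 σ I := by
  unfold S1 d1
  rw [← Finset.sum_add_distrib]
  refine Finset.sum_congr rfl fun y _ => ?_
  rw [spin_flip, spin_flip, spin_flip]
  have h1 := eps_mul (hI y).1
  have h2 := eps_mul (hI y).2
  linear_combination (spin (σ y) * spin (σ (y + (1,0)))) * h1 +
    (spin (σ y) * spin (σ (y + (0,1)))) * h2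

lemma S2_flip (σ : Config L M) (I : Finset (Site L M)) :
    S2 (flipC σ I) = S2 σ + d2 σ I := by
  unfold S2 d2
  rw [← Finset.sum_add_distrib]
  refine Finset.sum_congr rfl fun y _ => ?_
  rw [spin_flip]; ring

lemma eps_sub_one_sum (I : Finset (Site L M)) (z : Site L M) :
    eps I z - 1 = ∑ x ∈ I, (eps {x} z - 1) := by
  have : ∀ x : Site L M, eps {x} z - 1 = if z = x then (-2 : ℤ) else 0 := by
    intro x; by_cases h : z = x <;> simp [eps, h]
  rw [Finset.sum_congr rfl fun x _ => this x, Finset.sum_ite_eq]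
  by_cases h : z ∈ I <;> simp [eps, h]

lemma d1_sum (σ : Config L M) (I : Finset (Site L M)) :
    d1 σ I = ∑ x ∈ I, d1 σ {x} := by
  unfold d1
  rw [Finset.sum_comm]
  refine Finset.sum_congr rfl fun y _ => ?_
  rw [eps_sub_one_sum I y, eps_sub_one_sum I (y + (1,0)), eps_sub_one_sum I (y + (0,1))]
  rw [← Finset.sum_add_distrib, ← Finset.sum_add_distrib, Finset.sum_mul, Finset.sum_mul,
    ← Finset.sum_add_distrib]

lemma d2_sum (σ : Config L M) (I : Finset (Site L M)) :
    d2 σ I = ∑ x ∈ I, d2 σ {x} := by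
  unfold d2
  rw [Finset.sum_comm]
  refine Finset.sum_congr rfl fun y _ => ?_
  rw [eps_sub_one_sum I y, Finset.sum_mul]

lemma ham_eq (J h : ℝ) (σ : Config L M) :
    ham J h σ = -(J/2) * ((S1 σ : ℤ) : ℝ) - (h/2) * ((S2 σ : ℤ) : ℝ) := by
  unfold ham S1 S2
  push_cast
  ring

lemma ham_flip (J h : ℝ) (σ : Config L M) {I : Finset (Site L M)} (hI : Indep I) :
    ham J h (flipC σ I) = ham J h σ + (-(J/2) * ((d1 σ I : ℤ) : ℝ) - (h/2) * ((d2 σ I : ℤ) : ℝ)) := by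
  rw [ham_eq, ham_eq, S1_flip σ hI, S2_flip σ I]
  push_cast
  ring

lemma singleton_indep {x : Site L M} : Indep ({x} : Finset (Site L M)) := by
  haveI : Fact (1 < 2 * L) := ⟨by have := NeZero.pos L; omega⟩
  haveI : Fact (1 < 2 * M) := ⟨by have := NeZero.pos M; omega⟩
  intro y
  constructor
  · rintro ⟨h1, h2⟩
    simp only [Finset.mem_singleton] at h1 h2
    subst h1
    have := congrArg Prod.fst h2
    simp only [Prod.fst_add] at this
    exact one_ne_zero (left_eq_add.mp this.symm)
  · rintro ⟨h1, h2⟩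
    simp only [Finset.mem_singleton] at h1 h2
    subst h1
    have := congrArg Prod.snd h2
    simp only [Prod.snd_add] at this
    exact one_ne_zero (left_eq_add.mp this.symm)

lemma ham_flip_sum (J h : ℝ) (σ : Config L M) {I : Finset (Site L M)} (hI : Indep I) :
    ham J h (flipC σ I) = ham J h σ + ∑ x ∈ I, (ham J h (flipC σ {x}) - ham J h σ) := by
  rw [ham_flip J h σ hI, d1_sum, d2_sum]
  congr 1
  have key : ∀ x ∈ I, ham J h (flipC σ {x}) - ham J h σ
      = -(J/2) * ((d1 σ {x} : ℤ) : ℝ) - (h/2) * ((d2 σ {x} : ℤ) : ℝ) := by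
    intro x _
    rw [ham_flip J h σ singleton_indep]; ring
  rw [Finset.sum_congr rfl key, Finset.sum_sub_distrib, ← Finset.mul_sum, ← Finset.mul_sum]
  push_cast
  ring

lemma add_one_val_parity {N : ℕ} [NeZero N] (a : ZMod (2*N)) :
    (a + 1).val % 2 = (a.val + 1) % 2 := by
  haveI : NeZero (2*N) := ⟨by have := NeZero.pos N; omega⟩
  haveI : Fact (1 < 2*N) := ⟨by have := NeZero.pos N; omega⟩
  rw [ZMod.val_add, ZMod.val_one]
  exact Nat.mod_mod_of_dvd _ ⟨N, rfl⟩

lemma parity_e1 (y : Site L M) :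
    ((y + (1,0)).1.val + (y + (1,0)).2.val) % 2 = (y.1.val + y.2.val + 1) % 2 := by
  show ((y.1 + 1).val + (y.2 + 0).val) % 2 = _
  rw [add_zero]
  have := add_one_val_parity (N := L) y.1
  omega

lemma parity_e2 (y : Site L M) :
    ((y + (0,1)).1.val + (y + (0,1)).2.val) % 2 = (y.1.val + y.2.val + 1) % 2 := by
  show ((y.1 + 0).val + (y.2 + 1).val) % 2 = _
  rw [add_zero]
  have := add_one_val_parity (N := M) y.2
  omega

lemma subset_indep {I : Finset (Site L M)}
    (hI : I ⊆ evens L M ∨ I ⊆ odds L M) : Indep I := by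
  intro y
  have he1 := parity_e1 y
  have he2 := parity_e2 y
  constructor
  · rintro ⟨h1, h2⟩
    rcases hI with hs | hs
    · have a := (Finset.mem_filter.mp (hs h1)).2
      have b := (Finset.mem_filter.mp (hs h2)).2
      rw [Nat.even_iff] at a b; omega
    · have a := (Finset.mem_filter.mp (hs h1)).2
      have b := (Finset.mem_filter.mp (hs h2)).2
      rw [Nat.even_iff] at a b; omega
  · rintro ⟨h1, h2⟩
    rcases hI with hs | hs
    · have a := (Finset.mem_filter.mp (hs h1)).2
      have b := (Finset.mem_filter.mp (hs h2)).2
      rw [Nat.even_iff] at a b; omega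
    · have a := (Finset.mem_filter.mp (hs h1)).2
      have b := (Finset.mem_filter.mp (hs h2)).2
      rw [Nat.even_iff] at a b; omega

end AuxLoc

/-- local minima for the alternate dynamics coincide with local minima
for the single-spin-flip dynamics. -/
theorem alt_local_min_iff_single_flip_local_min {L M : ℕ} [NeZero L] [NeZero M]
    (J h : ℝ) (hJ : 0 < J) (hh : 0 < h) (σ : Config L M) :
    (∀ η : Config L M, altNbr σ η → ham J h σ ≤ ham J h η) ↔
      (∀ x : Site L M, ham J h σ ≤ ham J h (flipC σ {x})) := by
  constructor
  · intro H x
    apply H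
    refine ⟨{x}, Finset.singleton_nonempty x, ?_, rfl⟩
    by_cases hx : Even (x.1.val + x.2.val)
    · left; simp [evens, Finset.singleton_subset_iff, Finset.mem_filter, hx]
    · right; simp only [odds, Finset.singleton_subset_iff, Finset.mem_filter, Finset.mem_univ, true_and]; exact hx
  · rintro H η ⟨I, hne, hsub, rfl⟩
    rw [AuxLoc.ham_flip_sum J h σ (AuxLoc.subset_indep hsub)]
    have : 0 ≤ ∑ x ∈ I, (ham J h (flipC σ {x}) - ham J h σ) :=
      Finset.sum_nonneg fun x _ => sub_nonneg.mpr (H x)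
    linarith
end

section
/- If σ is a local minimum of H for single-spin flips (H(σ^x) ≥ H(σ) for every site x), then for every nonempty subset I of the even sublattice, H(σ^I) ≥ H(σ). -/
open Finset

lemma spin_not (b : Bool) : spin (!b) = - spin b := by cases b <;> simp [spin]

def sgn {L M : ℕ} (I : Finset (Site L M)) (x : Site L M) : ℤ := if x ∈ I then -1 else 1

lemma spin_flipC {L M : ℕ} (σ : Config L M) (I : Finset (Site L M)) (x : Site L M) :
    spin (flipC σ I x) = sgn I x * spin (σ x) := by
  unfold flipC sgn; split <;> simp [spin_not]

noncomputable def locDiff {L M : ℕ} (J h : ℝ) (σ : Config L M) (I : Finset (Site L M))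
    (x : Site L M) : ℝ :=
  -(J/2) * (((sgn I x * sgn I (x + (1,0)) - 1) * (spin (σ x) * spin (σ (x + (1,0))))
      + (sgn I x * sgn I (x + (0,1)) - 1) * (spin (σ x) * spin (σ (x + (0,1)))) : ℤ) : ℝ)
  - (h/2) * (((sgn I x - 1) * spin (σ x) : ℤ) : ℝ)

lemma ham_flip_sub {L M : ℕ} [NeZero L] [NeZero M] (J h : ℝ) (σ : Config L M)
    (I : Finset (Site L M)) :
    ham J h (flipC σ I) - ham J h σ = ∑ x : Site L M, locDiff J h σ I x := by
  unfold ham locDiff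
  simp only [spin_flipC]
  push_cast
  rw [Finset.sum_sub_distrib]
  simp only [Finset.sum_add_distrib, Finset.sum_sub_distrib, ← Finset.mul_sum, sub_mul, ← Finset.sum_mul]
  have h1 : ∑ x : Site L M, ((sgn I x : ℝ) * (spin (σ x) : ℝ) * ((sgn I (x + (1,0)) : ℝ) * (spin (σ (x + (1,0))) : ℝ)))
      = ∑ x : Site L M, ((sgn I x : ℝ) * (sgn I (x + (1,0)) : ℝ)) * ((spin (σ x) : ℝ) * (spin (σ (x + (1,0))) : ℝ)) :=
    Finset.sum_congr rfl (fun x _ => by ring)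
  have h2 : ∑ x : Site L M, ((sgn I x : ℝ) * (spin (σ x) : ℝ) * ((sgn I (x + (0,1)) : ℝ) * (spin (σ (x + (0,1))) : ℝ)))
      = ∑ x : Site L M, ((sgn I x : ℝ) * (sgn I (x + (0,1)) : ℝ)) * ((spin (σ x) : ℝ) * (spin (σ (x + (0,1))) : ℝ)) :=
    Finset.sum_congr rfl (fun x _ => by ring)
  rw [h1, h2]
  ring

lemma val_add_one_mod_two {n : ℕ} [NeZero n] (hn : 1 < 2*n) (a : ZMod (2*n)) :
    (a + 1).val % 2 = (a.val + 1) % 2 := by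
  haveI : NeZero (2*n) := ⟨by omega⟩
  haveI : Fact (1 < 2*n) := ⟨hn⟩
  rw [ZMod.val_add, ZMod.val_one, Nat.mod_mod_of_dvd _ ⟨n, by ring⟩]

lemma not_both_even1 {L M : ℕ} [NeZero L] [NeZero M] (x : Site L M)
    (h1 : x ∈ evens L M) (h2 : x + (1,0) ∈ evens L M) : False := by
  simp only [evens, Finset.mem_filter, Finset.mem_univ, true_and] at h1 h2
  have hx : (x + ((1:ZMod (2*L)), (0:ZMod (2*M)))).1 = x.1 + 1 := rfl
  have hy : (x + ((1:ZMod (2*L)), (0:ZMod (2*M)))).2 = x.2 := by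
    show x.2 + 0 = x.2; rw [add_zero]
  rw [hx, hy] at h2
  have hL := NeZero.pos L
  have := val_add_one_mod_two (n := L) (by omega) x.1
  rw [Nat.even_iff] at h1 h2
  omega

lemma not_both_even2 {L M : ℕ} [NeZero L] [NeZero M] (x : Site L M)
    (h1 : x ∈ evens L M) (h2 : x + (0,1) ∈ evens L M) : False := by
  simp only [evens, Finset.mem_filter, Finset.mem_univ, true_and] at h1 h2
  have hx : (x + ((0:ZMod (2*L)), (1:ZMod (2*M)))).1 = x.1 := by
    show x.1 + 0 = x.1; rw [add_zero]
  have hy : (x + ((0:ZMod (2*L)), (1:ZMod (2*M)))).2 = x.2 + 1 := rfl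
  rw [hx, hy] at h2
  have hM := NeZero.pos M
  have := val_add_one_mod_two (n := M) (by omega) x.2
  rw [Nat.even_iff] at h1 h2
  omega

lemma ne_add_one1 {L M : ℕ} [NeZero L] [NeZero M] (x : Site L M) : x ≠ x + (1,0) := by
  haveI : Fact (1 < 2*L) := ⟨by have := NeZero.pos L; omega⟩
  intro h
  have : x.1 = x.1 + 1 := congrArg Prod.fst h
  exact one_ne_zero ((left_eq_add.mp this))

lemma ne_add_one2 {L M : ℕ} [NeZero L] [NeZero M] (x : Site L M) : x ≠ x + (0,1) := by
  haveI : Fact (1 < 2*M) := ⟨by have := NeZero.pos M; omega⟩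
  intro h
  have : x.2 = x.2 + 1 := congrArg Prod.snd h
  exact one_ne_zero ((left_eq_add.mp this))

lemma sgn_single_sum {L M : ℕ} (I : Finset (Site L M)) (x : Site L M) :
    ∑ y ∈ I, (sgn {y} x - 1) = sgn I x - 1 := by
  have : ∀ y ∈ I, sgn ({y} : Finset (Site L M)) x - 1 = if x = y then (-2:ℤ) else 0 := by
    intro y _; simp only [sgn, Finset.mem_singleton]; split <;> norm_num
  rw [Finset.sum_congr rfl this, Finset.sum_ite_eq I x (fun _ => (-2:ℤ))]
  simp only [sgn]; split <;> norm_num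

lemma sgn_pair_sum {L M : ℕ} (I : Finset (Site L M)) (x z : Site L M)
    (hxz : x ≠ z) (hnb : ¬(x ∈ I ∧ z ∈ I)) :
    ∑ y ∈ I, (sgn {y} x * sgn {y} z - 1) = sgn I x * sgn I z - 1 := by
  have h1 : ∀ y ∈ I, sgn ({y} : Finset (Site L M)) x * sgn {y} z - 1
      = (sgn {y} x - 1) + (sgn {y} z - 1) := by
    intro y _
    simp only [sgn, Finset.mem_singleton]
    rcases eq_or_ne x y with rfl | hne
    · rw [if_pos rfl, if_neg (fun hz => hxz hz.symm)]
      norm_num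
    · rw [if_neg hne]; ring
  rw [Finset.sum_congr rfl h1, Finset.sum_add_distrib, sgn_single_sum, sgn_single_sum]
  simp only [sgn]
  by_cases hx : x ∈ I <;> by_cases hz : z ∈ I
  · exact absurd ⟨hx, hz⟩ hnb
  · simp [hx, hz]
  · simp [hx, hz]
  · simp [hx, hz]

lemma locDiff_sum {L M : ℕ} [NeZero L] [NeZero M] (J h : ℝ) (σ : Config L M)
    (I : Finset (Site L M)) (hsub : I ⊆ evens L M) (x : Site L M) :
    ∑ y ∈ I, locDiff J h σ {y} x = locDiff J h σ I x := by
  have hnb1 : ¬(x ∈ I ∧ x + (1,0) ∈ I) :=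
    fun ⟨h1, h2⟩ => not_both_even1 x (hsub h1) (hsub h2)
  have hnb2 : ¬(x ∈ I ∧ x + (0,1) ∈ I) :=
    fun ⟨h1, h2⟩ => not_both_even2 x (hsub h1) (hsub h2)
  have hA := sgn_pair_sum I x (x + (1,0)) (ne_add_one1 x) hnb1
  have hB := sgn_pair_sum I x (x + (0,1)) (ne_add_one2 x) hnb2
  have hC := sgn_single_sum I x
  have hA' : ∑ y ∈ I, ((sgn {y} x : ℝ) * (sgn {y} (x + (1,0)) : ℝ) - 1)
      = (sgn I x : ℝ) * (sgn I (x + (1,0)) : ℝ) - 1 := by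
    have := congrArg (Int.cast : ℤ → ℝ) hA; push_cast at this; exact this
  have hB' : ∑ y ∈ I, ((sgn {y} x : ℝ) * (sgn {y} (x + (0,1)) : ℝ) - 1)
      = (sgn I x : ℝ) * (sgn I (x + (0,1)) : ℝ) - 1 := by
    have := congrArg (Int.cast : ℤ → ℝ) hB; push_cast at this; exact this
  have hC' : ∑ y ∈ I, ((sgn {y} x : ℝ) - 1) = (sgn I x : ℝ) - 1 := by
    have := congrArg (Int.cast : ℤ → ℝ) hC; push_cast at this; exact this
  unfold locDiff
  push_cast
  simp only [Finset.sum_sub_distrib] at hA' hB' hC'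
  simp only [Finset.sum_sub_distrib, Finset.sum_add_distrib, ← Finset.mul_sum, ← Finset.sum_mul]
  rw [hA', hB', hC']

/-- a single-spin-flip local minimum is stable under any simultaneous flip
of a nonempty subset of the even sublattice. -/
theorem single_flip_min_implies_even_parallel_min {L M : ℕ} [NeZero L] [NeZero M]
    (J h : ℝ) (hJ : 0 < J) (hh : 0 < h) (σ : Config L M)
    (hmin : ∀ x : Site L M, ham J h σ ≤ ham J h (flipC σ {x})) :
    ∀ I : Finset (Site L M), I.Nonempty → I ⊆ evens L M →
      ham J h σ ≤ ham J h (flipC σ I) := by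
  intro I _ hsub
  have key : ham J h (flipC σ I) - ham J h σ
      = ∑ y ∈ I, (ham J h (flipC σ {y}) - ham J h σ) := by
    rw [ham_flip_sub,
        Finset.sum_congr rfl (fun y (_ : y ∈ I) => ham_flip_sub J h σ {y}),
        Finset.sum_comm]
    exact (Finset.sum_congr rfl (fun x _ => (locDiff_sum J h σ I hsub x).symm))
  have hpos : 0 ≤ ∑ y ∈ I, (ham J h (flipC σ {y}) - ham J h σ) :=
    Finset.sum_nonneg fun y _ => sub_nonneg.mpr (hmin y)
  linarith [key ▸ hpos]
end

section
/- There exist a configuration σ and a set I = {x₁,...,x_n} of pairwise non-adjacent sites such that H(σ^I) ≤ H(σ) while H(σ^{x_i}) − H(σ) > 0 for some i. (Concretely: a parallel move can lower the energy even though one of its component single-spin flips raises it.) -/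
open Finset

/- ====================  auxiliary material  ==================== -/

def Ef {L M : ℕ} (τ : Config L M) (x : Site L M) : ℝ :=
  ((spin (τ x) * spin (τ (x + (1,0))) + spin (τ x) * spin (τ (x + (0,1))) : ℤ) : ℝ)

def Ff {L M : ℕ} (τ : Config L M) (x : Site L M) : ℝ := ((spin (τ x) : ℤ) : ℝ)

lemma ham_eq {L M : ℕ} [NeZero L] [NeZero M] (J h : ℝ) (τ : Config L M) :
    ham J h τ = -(J/2) * ∑ x : Site L M, Ef τ x - (h/2) * ∑ x : Site L M, Ff τ x := rfl

lemma zk_ne_zero {n k : ℕ} (hk : 0 < k) (hkn : k < n) : ((k : ℕ) : ZMod n) ≠ 0 := by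
  haveI : NeZero n := ⟨by omega⟩
  rw [Ne, ZMod.natCast_eq_zero_iff]
  intro hdvd
  exact absurd (Nat.le_of_dvd hk hdvd) (by omega)

lemma sum_sub_support {α : Type} [Fintype α] [DecidableEq α] (f g : α → ℝ) (s : Finset α)
    (h : ∀ x ∉ s, f x = g x) :
    (∑ x, f x) - ∑ x, g x = ∑ x ∈ s, (f x - g x) := by
  rw [← Finset.sum_sub_distrib]
  exact (Finset.sum_subset (Finset.subset_univ s) (fun x _ hx => by rw [h x hx, sub_self])).symm

lemma ham_shift {L M : ℕ} [NeZero L] [NeZero M] (J h : ℝ) (σ : Config L M) (c : Site L M) :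
    ham J h (fun x => σ (x + c)) = ham J h σ := by
  rw [ham_eq, ham_eq]
  congr 1
  · congr 1
    refine Fintype.sum_equiv (Equiv.addRight c) _ _ (fun x => ?_)
    simp only [Equiv.coe_addRight, Ef]
    rw [add_right_comm x c (1,0), add_right_comm x c (0,1)]
  · congr 1
    exact Fintype.sum_equiv (Equiv.addRight c) _ _ (fun x => rfl)

/- ====================  the theorem  ==================== -/

/-- a parallel move can be energetically non-increasing even though one of
its component single-spin flips strictly raises the energy. -/
theorem parallel_move_beats_single_flips {L M : ℕ} [NeZero L] [NeZero M]
    (J h : ℝ) (hh : 0 < h) (hJ : 2*h < J) (hL : 2 ≤ L) (hM : 2 ≤ M) :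
    ∃ (σ : Config L M) (I : Finset (Site L M)),
      (I ⊆ evens L M ∨ I ⊆ odds L M) ∧
      ham J h (flipC σ I) ≤ ham J h σ ∧
      ∃ x ∈ I, 0 < ham J h (flipC σ {x}) - ham J h σ := by
  haveI : NeZero (2*L) := ⟨by have := NeZero.ne L; omega⟩
  haveI : NeZero (2*M) := ⟨by have := NeZero.ne M; omega⟩
  -- basic ZMod facts
  have z1 : (1 : ZMod (2*L)) ≠ 0 := by
    have := zk_ne_zero (n := 2*L) (k := 1) (by norm_num) (by omega); simpa using this
  have z2 : (2 : ZMod (2*L)) ≠ 0 := by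
    have := zk_ne_zero (n := 2*L) (k := 2) (by norm_num) (by omega); simpa using this
  have z3 : (3 : ZMod (2*L)) ≠ 0 := by
    have := zk_ne_zero (n := 2*L) (k := 3) (by norm_num) (by omega); simpa using this
  have z02 : (0 : ZMod (2*L)) ≠ 2 := fun e => z2 e.symm
  have z12 : (1 : ZMod (2*L)) ≠ 2 := fun e => z1 (by linear_combination -e)
  have z10 : (1 : ZMod (2*L)) ≠ 0 := z1
  have zm10 : (-1 : ZMod (2*L)) ≠ 0 := by simpa [neg_eq_zero] using z1
  have zm12 : (-1 : ZMod (2*L)) ≠ 2 := fun e => z3 (by linear_combination -e)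
  have w1 : (1 : ZMod (2*M)) ≠ 0 := by
    have := zk_ne_zero (n := 2*M) (k := 1) (by norm_num) (by omega); simpa using this
  have wm10 : (-1 : ZMod (2*M)) ≠ 0 := by simpa [neg_eq_zero] using w1
  -- the configuration and the sites
  set b : Site L M := ((2 : ZMod (2*L)), (0 : ZMod (2*M))) with hbdef
  set σ : Config L M := (fun x => decide (x = b)) with hσdef
  set a : Site L M := ((0 : ZMod (2*L)), (0 : ZMod (2*M))) with hadef
  set p : Site L M := ((-1 : ZMod (2*L)), (0 : ZMod (2*M))) with hpdef
  set q : Site L M := ((0 : ZMod (2*L)), (-1 : ZMod (2*M))) with hqdef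
  have hab : a ≠ b := by simp [hadef, hbdef, Prod.ext_iff, z02]
  -- values of σ
  have hσv : ∀ y : Site L M, y ≠ b → σ y = false := by
    intro y hy; simp [hσdef, hy]
  have hσb : σ b = true := by simp [hσdef]
  set σ1 : Config L M := flipC σ {a} with hσ1def
  have h1 : ∀ y : Site L M, y ≠ a → σ1 y = σ y := by
    intro y hy; simp [hσ1def, flipC, hy]
  have h1a : σ1 a = true := by
    simp [hσ1def, flipC, hσv a hab]
  -- site arithmetic
  have ea1 : a + ((1,0) : Site L M) = ((1 : ZMod (2*L)), (0 : ZMod (2*M))) := by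
    simp [hadef, Prod.ext_iff]
  have ea2 : a + ((0,1) : Site L M) = ((0 : ZMod (2*L)), (1 : ZMod (2*M))) := by
    simp [hadef, Prod.ext_iff]
  have ep1 : p + ((1,0) : Site L M) = a := by
    simp [hpdef, hadef, Prod.ext_iff]
  have ep2 : p + ((0,1) : Site L M) = ((-1 : ZMod (2*L)), (1 : ZMod (2*M))) := by
    simp [hpdef, Prod.ext_iff]
  have eq1 : q + ((1,0) : Site L M) = ((1 : ZMod (2*L)), (-1 : ZMod (2*M))) := by
    simp [hqdef, Prod.ext_iff]
  have eq2 : q + ((0,1) : Site L M) = a := by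
    simp [hqdef, hadef, Prod.ext_iff]
  -- values at all relevant sites
  have v10a : ((1 : ZMod (2*L)), (0 : ZMod (2*M))) ≠ a := by simp [hadef, Prod.ext_iff, z10]
  have v10b : ((1 : ZMod (2*L)), (0 : ZMod (2*M))) ≠ b := by simp [hbdef, Prod.ext_iff, z12]
  have v01a : ((0 : ZMod (2*L)), (1 : ZMod (2*M))) ≠ a := by simp [hadef, Prod.ext_iff, w1]
  have v01b : ((0 : ZMod (2*L)), (1 : ZMod (2*M))) ≠ b := by simp [hbdef, Prod.ext_iff, z02]
  have vpa : p ≠ a := by simp [hpdef, hadef, Prod.ext_iff, zm10]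
  have vpb : p ≠ b := by simp [hpdef, hbdef, Prod.ext_iff, zm12]
  have vm11a : ((-1 : ZMod (2*L)), (1 : ZMod (2*M))) ≠ a := by
    simp [hadef, Prod.ext_iff, zm10]
  have vm11b : ((-1 : ZMod (2*L)), (1 : ZMod (2*M))) ≠ b := by
    simp [hbdef, Prod.ext_iff, zm12]
  have vqa : q ≠ a := by simp [hqdef, hadef, Prod.ext_iff, wm10]
  have vqb : q ≠ b := by simp [hqdef, hbdef, Prod.ext_iff, z02]
  have v1m1a : ((1 : ZMod (2*L)), (-1 : ZMod (2*M))) ≠ a := by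
    simp [hadef, Prod.ext_iff, z10]
  have v1m1b : ((1 : ZMod (2*L)), (-1 : ZMod (2*M))) ≠ b := by
    simp [hbdef, Prod.ext_iff, z12]
  -- the three changed edge terms
  have Ea : Ef σ1 a - Ef σ a = -4 := by
    simp only [Ef, ea1, ea2, h1a, h1 _ v10a, h1 _ v01a, hσv _ hab, hσv _ v10b, hσv _ v01b]
    norm_num [spin]
  have Ep : Ef σ1 p - Ef σ p = -2 := by
    simp only [Ef, ep1, ep2, h1a, h1 _ vpa, h1 _ vm11a, hσv _ vpb, hσv _ hab, hσv _ vm11b]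
    norm_num [spin]
  have Eq' : Ef σ1 q - Ef σ q = -2 := by
    simp only [Ef, eq1, eq2, h1a, h1 _ vqa, h1 _ v1m1a, hσv _ vqb, hσv _ hab, hσv _ v1m1b]
    norm_num [spin]
  -- distinctness of the support
  have dap : a ≠ p := fun e => vpa e.symm
  have daq : a ≠ q := fun e => vqa e.symm
  have dpq : p ≠ q := by simp [hpdef, hqdef, Prod.ext_iff, zm10]
  -- edge-sum difference
  have hoffE : ∀ x ∉ ({a, p, q} : Finset (Site L M)), Ef σ1 x = Ef σ x := by
    intro x hx
    simp only [Finset.mem_insert, Finset.mem_singleton, not_or] at hx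
    obtain ⟨hxa, hxp, hxq⟩ := hx
    have e0 : σ1 x = σ x := h1 x hxa
    have e1 : σ1 (x + (1,0)) = σ (x + (1,0)) := by
      refine h1 _ (fun e => hxp ?_)
      have : x = a - (1,0) := eq_sub_of_add_eq e
      rw [this]; simp [hadef, hpdef, Prod.ext_iff]
    have e2 : σ1 (x + (0,1)) = σ (x + (0,1)) := by
      refine h1 _ (fun e => hxq ?_)
      have : x = a - (0,1) := eq_sub_of_add_eq e
      rw [this]; simp [hadef, hqdef, Prod.ext_iff]
    simp only [Ef, e0, e1, e2]
  have hE : (∑ x : Site L M, Ef σ1 x) - ∑ x : Site L M, Ef σ x = -8 := by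
    rw [sum_sub_support _ _ _ hoffE]
    rw [Finset.sum_insert (by simp [dap, daq]), Finset.sum_insert (by simp [dpq]),
      Finset.sum_singleton, Ea, Ep, Eq']
    norm_num
  -- field-sum difference
  have hoffF : ∀ x ∉ ({a} : Finset (Site L M)), Ff σ1 x = Ff σ x := by
    intro x hx
    simp only [Finset.mem_singleton] at hx
    simp only [Ff, h1 x hx]
  have hF : (∑ x : Site L M, Ff σ1 x) - ∑ x : Site L M, Ff σ x = 2 := by
    rw [sum_sub_support _ _ _ hoffF, Finset.sum_singleton]
    simp only [Ff, h1a, hσv _ hab]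
    norm_num [spin]
  -- single-flip energy difference
  have key : ham J h σ1 - ham J h σ = 4*J - h := by
    have expand : ham J h σ1 - ham J h σ
        = -(J/2) * ((∑ x : Site L M, Ef σ1 x) - ∑ x : Site L M, Ef σ x)
          - (h/2) * ((∑ x : Site L M, Ff σ1 x) - ∑ x : Site L M, Ff σ x) := by
      rw [ham_eq, ham_eq]; ring
    rw [expand, hE, hF]; ring
  -- parallel flip is a translate
  have hflip2 : flipC σ {a, b} = fun x => σ (x + b) := by
    funext x
    have hx0 : x + b = b → x = a := by
      intro e
      have e' : x + b = 0 + b := by rw [zero_add]; exact e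
      have hx : x = 0 := add_right_cancel e'
      rw [hx]; simp [hadef, Prod.ext_iff]
    by_cases hxa : x = a
    · subst hxa
      have : a + b = b := by simp [hadef]
      simp [flipC, hσv a hab, this, hσb]
    · by_cases hxb : x = b
      · have hne : x + b ≠ b := fun e => hab ((hx0 e).symm.trans hxb)
        have hne' : b + b ≠ b := hxb ▸ hne
        simp [flipC, hxb, hσb, hσv _ hne']
      · have hne : x + b ≠ b := fun e => hxa (hx0 e)
        simp [flipC, hxa, hxb, hσv _ hxb, hσv _ hne]
  have hflipeq : ham J h (flipC σ {a, b}) = ham J h σ := by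
    rw [hflip2]; exact ham_shift J h σ b
  -- membership in evens
  have haev : a ∈ evens L M := by
    simp [evens, hadef, ZMod.val_zero]
  have hbev : b ∈ evens L M := by
    have h2v : (2 : ZMod (2*L)).val = 2 := by
      have : ((2 : ℕ) : ZMod (2*L)).val = 2 := ZMod.val_cast_of_lt (by omega)
      simpa using this
    simp [evens, hbdef, ZMod.val_zero, h2v]
  refine ⟨σ, {a, b}, Or.inl ?_, le_of_eq hflipeq, a, by simp, ?_⟩
  · intro x hx
    simp only [Finset.mem_insert, Finset.mem_singleton] at hx
    rcases hx with rfl | rfl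
    · exact haev
    · exact hbev
  · rw [← hσ1def] at *
    rw [key]
    linarith
end

section
/- For every configuration η in ∂_{≥2}𝒜 there exists a configuration ζ in ∂₁𝒜 with H(ζ) < H(η). More precisely: let I be a minimal-cardinality subset of one sublattice with η^I ∈ 𝒜; assume |I| ≥ 2, η(x) = +1 and H(η^x) < H(η) for all x ∈ I; then for any x ∈ I, the configuration ζ = η^{I∖{x}} satisfies ζ ∉ 𝒜, ζ^x ∈ 𝒜, and H(ζ) < H(η). -/
open Finset

lemma zmodOneNeZero (L : ℕ) [NeZero L] : (1 : ZMod (2*L)) ≠ 0 := by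
  haveI : Fact (1 < 2*L) := ⟨by have := Nat.pos_of_ne_zero (NeZero.ne L); omega⟩
  exact one_ne_zero

lemma e1_ne_zero (L M : ℕ) [NeZero L] [NeZero M] : ((1,0) : Site L M) ≠ 0 := by
  intro hc; exact zmodOneNeZero L (congrArg Prod.fst hc)

lemma e2_ne_zero (L M : ℕ) [NeZero L] [NeZero M] : ((0,1) : Site L M) ≠ 0 := by
  intro hc; exact zmodOneNeZero M (congrArg Prod.snd hc)

lemma e1_ne_e2 (L M : ℕ) [NeZero L] [NeZero M] : ((1,0) : Site L M) ≠ (0,1) := by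
  intro hc; exact zmodOneNeZero L (congrArg Prod.fst hc)

lemma flipC_flipC {L M : ℕ} (η : Config L M) (S : Finset (Site L M)) (y : Site L M)
    (hy : y ∉ S) : flipC (flipC η S) {y} = flipC η (insert y S) := by
  funext z
  by_cases h1 : z = y
  · subst h1; simp [flipC, hy]
  · by_cases h2 : z ∈ S <;> simp [flipC, h1, h2]

lemma parity_e1 {L M : ℕ} [NeZero L] [NeZero M] (x : Site L M) :
    Even ((x + (1,0)).1.val + (x + (1,0)).2.val) ↔ ¬ Even (x.1.val + x.2.val) := by
  haveI : Fact (1 < 2*L) := ⟨by have := Nat.pos_of_ne_zero (NeZero.ne L); omega⟩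
  have h1 : (x + (1,0)).1 = x.1 + 1 := rfl
  have h2 : (x + (1,0)).2 = x.2 := by show x.2 + 0 = x.2; ring
  rw [h1, h2, ZMod.val_add, ZMod.val_one]
  have hdvd : (2:ℕ) ∣ 2*L := ⟨L, rfl⟩
  have hm : ((x.1.val + 1) % (2*L)) % 2 = (x.1.val + 1) % 2 := Nat.mod_mod_of_dvd _ hdvd
  rw [Nat.even_iff, Nat.even_iff]
  omega

lemma parity_e2 {L M : ℕ} [NeZero L] [NeZero M] (x : Site L M) :
    Even ((x + (0,1)).1.val + (x + (0,1)).2.val) ↔ ¬ Even (x.1.val + x.2.val) := by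
  haveI : Fact (1 < 2*M) := ⟨by have := Nat.pos_of_ne_zero (NeZero.ne M); omega⟩
  have h1 : (x + (0,1)).1 = x.1 := by show x.1 + 0 = x.1; ring
  have h2 : (x + (0,1)).2 = x.2 + 1 := rfl
  rw [h1, h2, ZMod.val_add, ZMod.val_one]
  have hdvd : (2:ℕ) ∣ 2*M := ⟨M, rfl⟩
  have hm : ((x.2.val + 1) % (2*M)) % 2 = (x.2.val + 1) % 2 := Nat.mod_mod_of_dvd _ hdvd
  rw [Nat.even_iff, Nat.even_iff]
  omega

noncomputable def dE {L M : ℕ} [NeZero L] [NeZero M] (J h : ℝ) (σ : Config L M)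
    (y : Site L M) : ℝ :=
  J * ((spin (σ y) * (spin (σ (y+(1,0))) + spin (σ (y-(1,0))) + spin (σ (y+(0,1)))
      + spin (σ (y-(0,1)))) : ℤ) : ℝ) + h * ((spin (σ y) : ℤ) : ℝ)

lemma ham_flip_single {L M : ℕ} [NeZero L] [NeZero M] (J h : ℝ) (σ : Config L M)
    (y : Site L M) : ham J h (flipC σ {y}) = ham J h σ + dE J h σ y := by
  have ha1 : y + (1,0) ≠ y := by
    intro hc; exact e1_ne_zero L M (add_left_cancel (hc.trans (add_zero y).symm))
  have ha2 : y + (0,1) ≠ y := by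
    intro hc; exact e2_ne_zero L M (add_left_cancel (hc.trans (add_zero y).symm))
  have hb1 : y - (1,0) ≠ y := fun hc => e1_ne_zero L M (sub_eq_self.mp hc)
  have hb2 : y - (0,1) ≠ y := fun hc => e2_ne_zero L M (sub_eq_self.mp hc)
  have hb12 : y - (1,0) ≠ y - (0,1) := fun hc => e1_ne_e2 L M (sub_right_inj.mp hc)
  have hc1 : y - (1,0) + (0,1) ≠ y := by
    intro hc
    rw [sub_add_eq_add_sub, sub_eq_iff_eq_add] at hc
    exact e1_ne_e2 L M (add_left_cancel hc).symm
  have hc2 : y - (0,1) + (1,0) ≠ y := by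
    intro hc
    rw [sub_add_eq_add_sub, sub_eq_iff_eq_add] at hc
    exact e1_ne_e2 L M (add_left_cancel hc)
  have hd1 : y - (1,0) + (1,0) = y := sub_add_cancel y (1,0)
  have hd2 : y - (0,1) + (0,1) = y := sub_add_cancel y (0,1)
  have hG : ∀ x : Site L M, ((spin (flipC σ {y} x) : ℤ) : ℝ)
      = ((spin (σ x) : ℤ) : ℝ) + (if x = y then (-2 : ℝ) * ((spin (σ y) : ℤ) : ℝ) else 0) := by
    intro x
    by_cases hx : x = y
    · subst hx; simp [flipC, spin_not]; ring
    · simp [flipC, hx]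
  have hF : ∀ x : Site L M,
      ((spin (flipC σ {y} x) * spin (flipC σ {y} (x+(1,0)))
        + spin (flipC σ {y} x) * spin (flipC σ {y} (x+(0,1))) : ℤ) : ℝ)
      = ((spin (σ x) * spin (σ (x+(1,0))) + spin (σ x) * spin (σ (x+(0,1))) : ℤ) : ℝ)
        + (if x = y then (-2:ℝ) * ((spin (σ y) * (spin (σ (y+(1,0))) + spin (σ (y+(0,1)))) : ℤ) : ℝ) else 0)
        + (if x = y - (1,0) then (-2:ℝ) * ((spin (σ (y-(1,0))) * spin (σ y) : ℤ) : ℝ) else 0)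
        + (if x = y - (0,1) then (-2:ℝ) * ((spin (σ (y-(0,1))) * spin (σ y) : ℤ) : ℝ) else 0) := by
    intro x
    by_cases h1 : x = y
    · subst h1
      rw [if_pos rfl, if_neg (Ne.symm hb1), if_neg (Ne.symm hb2)]
      simp [flipC, ha1, ha2, spin_not]
      ring
    · by_cases h2 : x = y - (1,0)
      · subst h2
        rw [if_neg h1, if_pos rfl, if_neg hb12, hd1]
        simp [flipC, h1, hb1, hc1, spin_not]
        ring
      · by_cases h3 : x = y - (0,1)
        · subst h3
          rw [if_neg h1, if_neg h2, if_pos rfl, hd2]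
          simp [flipC, h1, hb2, hc2, spin_not]
          ring
        · have k1 : x + (1,0) ≠ y := fun hc => h2 (eq_sub_of_add_eq hc)
          have k2 : x + (0,1) ≠ y := fun hc => h3 (eq_sub_of_add_eq hc)
          rw [if_neg h1, if_neg h2, if_neg h3]
          simp [flipC, h1, k1, k2]
  unfold ham dE
  rw [Finset.sum_congr rfl (fun x _ => hF x), Finset.sum_congr rfl (fun x _ => hG x)]
  rw [Finset.sum_add_distrib, Finset.sum_add_distrib, Finset.sum_add_distrib,
    Finset.sum_add_distrib]
  rw [Finset.sum_ite_eq' univ y, Finset.sum_ite_eq' univ (y - (1,0)),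
    Finset.sum_ite_eq' univ (y - (0,1)), Finset.sum_ite_eq' univ y]
  simp only [Finset.mem_univ, if_pos]
  push_cast
  ring

lemma nbr_not_mem {L M : ℕ} [NeZero L] [NeZero M] (a : Site L M) (S : Finset (Site L M))
    (hS : insert a S ⊆ evens L M ∨ insert a S ⊆ odds L M) :
    (a+(1,0)) ∉ S ∧ (a-(1,0)) ∉ S ∧ (a+(0,1)) ∉ S ∧ (a-(0,1)) ∉ S := by
  have hd1 : a - (1,0) + (1,0) = a := sub_add_cancel a (1,0)
  have hd2 : a - (0,1) + (0,1) = a := sub_add_cancel a (0,1)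
  rcases hS with hS | hS
  · have hpar : ∀ z ∈ insert a S, Even (z.1.val + z.2.val) := by
      intro z hz; have := hS hz; simpa [evens] using this
    have haP := hpar a (mem_insert_self a S)
    refine ⟨fun hm => ?_, fun hm => ?_, fun hm => ?_, fun hm => ?_⟩
    · exact ((parity_e1 a).mp (hpar _ (mem_insert_of_mem hm))) haP
    · have hz := hpar _ (mem_insert_of_mem hm)
      have hiff := parity_e1 (a - (1,0))
      rw [hd1] at hiff
      exact (hiff.mp haP) hz
    · exact ((parity_e2 a).mp (hpar _ (mem_insert_of_mem hm))) haP
    · have hz := hpar _ (mem_insert_of_mem hm)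
      have := (parity_e2 (a - (0,1))).mp (by rw [hd2]; exact haP)
      exact this hz
  · have hpar : ∀ z ∈ insert a S, ¬ Even (z.1.val + z.2.val) := by
      intro z hz; have := hS hz; simpa [odds] using this
    have haP := hpar a (mem_insert_self a S)
    refine ⟨fun hm => ?_, fun hm => ?_, fun hm => ?_, fun hm => ?_⟩
    · have hz := hpar _ (mem_insert_of_mem hm)
      exact hz ((parity_e1 a).mpr haP)
    · have hz := hpar _ (mem_insert_of_mem hm)
      have hiff := parity_e1 (a - (1,0))
      rw [hd1] at hiff
      exact haP (hiff.mpr hz)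
    · have hz := hpar _ (mem_insert_of_mem hm)
      exact hz ((parity_e2 a).mpr haP)
    · have hz := hpar _ (mem_insert_of_mem hm)
      have hiff := parity_e2 (a - (0,1))
      rw [hd2] at hiff
      exact haP (hiff.mpr hz)

lemma ham_flip_set {L M : ℕ} [NeZero L] [NeZero M] (J h : ℝ) (η : Config L M) :
    ∀ S : Finset (Site L M), (S ⊆ evens L M ∨ S ⊆ odds L M) →
    ham J h (flipC η S) = ham J h η + ∑ y ∈ S, (ham J h (flipC η {y}) - ham J h η) := by
  intro S
  induction S using Finset.induction_on with
  | empty =>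
      intro _
      have : flipC η ∅ = η := funext fun z => by simp [flipC]
      simp [this]
  | @insert a S haS ih =>
      intro hS
      have hS' : S ⊆ evens L M ∨ S ⊆ odds L M :=
        hS.imp (fun h' => (subset_insert a S).trans h') (fun h' => (subset_insert a S).trans h')
      obtain ⟨k1, k2, k3, k4⟩ := nbr_not_mem a S hS
      have hagree : ∀ z : Site L M, z ∉ S → flipC η S z = η z := by
        intro z hz; simp [flipC, hz]
      have hdE : dE J h (flipC η S) a = dE J h η a := by
        unfold dE
        rw [hagree a haS, hagree _ k1, hagree _ k2, hagree _ k3, hagree _ k4]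
      have h1 : ham J h (flipC η (insert a S)) = ham J h (flipC η S) + dE J h η a := by
        rw [← flipC_flipC η S a haS, ham_flip_single, hdE]
      have h2 : dE J h η a = ham J h (flipC η {a}) - ham J h η := by
        have := ham_flip_single J h η a; linarith
      rw [h1, h2, ih hS', Finset.sum_insert haS]
      ring

/-- from a configuration of the boundary part reached only by multi-spin
flips one can pass to a strictly lower-energy configuration of the single-flip boundary. -/
theorem multi_flip_boundary_dominated {L M : ℕ} [NeZero L] [NeZero M]
    (J h : ℝ) (hJ : 0 < J) (hh : 0 < h)
    (A : Set (Config L M)) (η : Config L M) (hη : η ∉ A)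
    (I : Finset (Site L M)) (hIs : I ⊆ evens L M ∨ I ⊆ odds L M)
    (hIA : flipC η I ∈ A)
    (hmin : ∀ I' : Finset (Site L M), I'.Nonempty → (I' ⊆ evens L M ∨ I' ⊆ odds L M) →
      flipC η I' ∈ A → I.card ≤ I'.card)
    (hcard : 2 ≤ I.card)
    (hplus : ∀ x ∈ I, η x = true ∧ ham J h (flipC η {x}) < ham J h η) :
    ∀ x ∈ I, flipC η (I.erase x) ∉ A ∧ flipC (flipC η (I.erase x)) {x} ∈ A ∧
      ham J h (flipC η (I.erase x)) < ham J h η := by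
  intro x hx
  have hsub : I.erase x ⊆ evens L M ∨ I.erase x ⊆ odds L M :=
    hIs.imp (fun h' => (erase_subset x I).trans h') (fun h' => (erase_subset x I).trans h')
  have hne : (I.erase x).Nonempty := by
    rw [← Finset.card_pos, Finset.card_erase_of_mem hx]; omega
  refine ⟨?_, ?_, ?_⟩
  · intro hmem
    have := hmin _ hne hsub hmem
    rw [Finset.card_erase_of_mem hx] at this
    omega
  · rw [flipC_flipC η _ x (notMem_erase x I), insert_erase hx]
    exact hIA
  · have hadd := ham_flip_set J h η (I.erase x) hsub
    have hsum : ∑ y ∈ I.erase x, (ham J h (flipC η {y}) - ham J h η) < 0 := by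
      apply Finset.sum_neg (fun y hy => ?_) hne
      have := (hplus y (Finset.mem_of_mem_erase hy)).2
      linarith
    linarith
end

section
/- For the critical configuration 𝒫, consisting of all minus spins except for an ℓ*×(ℓ*−1) rectangle of pluses together with a single unit protuberance attached to one of the longer sides, the energy gap satisfies H(𝒫) − H(−1) = 4Jℓ* − h((ℓ*)² − ℓ* + 1), where −1 is the all-minus configuration. -/
open Finset

def rectConf (L M : ℕ) [NeZero L] [NeZero M] (a b : ℕ) : Config L M :=
  fun x => decide (∃ i < a, ∃ j < b, x = ((i : ZMod (2*L)), ((j : ZMod (2*M)))))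

def allMinus (L M : ℕ) : Config L M := fun _ => false
noncomputable def lstar (J h : ℝ) : ℕ := ⌊2*J/h⌋₊ + 1

/-! ### Auxiliary lemmas -/

section Aux

variable {L M : ℕ} [NeZero L] [NeZero M]

lemma val_add_one' {k : ℕ} [NeZero k] {a : ZMod k} (h : a.val + 1 < k) :
    (a + 1).val = a.val + 1 := by
  have h1 : (1 : ZMod k).val = 1 := by
    have hk : (1:ℕ) < k := by omega
    rw [← Nat.cast_one, ZMod.val_cast_of_lt hk]
  rw [ZMod.val_add, h1, Nat.mod_eq_of_lt h]

/-- Energy difference in terms of the number of plus sites and the number of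
adjacent plus–plus pairs. -/
lemma ham_diff (J h : ℝ) (σ : Config L M) :
    ham J h σ - ham J h (allMinus L M)
      = -2*J*(((univ.filter fun x : Site L M => σ x = true ∧ σ (x+(1,0)) = true).card : ℝ)
              + ((univ.filter fun x : Site L M => σ x = true ∧ σ (x+(0,1)) = true).card : ℝ))
        + (4*J - h) * ((univ.filter fun x : Site L M => σ x = true).card : ℝ) := by
  classical
  set N : ℤ := (Fintype.card (Site L M) : ℤ) with hN
  set A : ℤ := ((univ.filter fun x : Site L M => σ x = true).card : ℤ) with hA
  set C1 : ℤ := ((univ.filter fun x : Site L M => σ x = true ∧ σ (x+(1,0)) = true).card : ℤ) with hC1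
  set C2 : ℤ := ((univ.filter fun x : Site L M => σ x = true ∧ σ (x+(0,1)) = true).card : ℤ) with hC2
  have key : ∀ e : Site L M,
      (∑ x : Site L M, spin (σ x) * spin (σ (x+e)))
        = 4 * ((univ.filter fun x : Site L M => σ x = true ∧ σ (x+e) = true).card : ℤ)
          - 4 * A + N := by
    intro e
    have h1 : ∀ x : Site L M, spin (σ x) * spin (σ (x+e))
        = (if σ x = true ∧ σ (x+e) = true then (4:ℤ) else 0)
          - 2*(if σ x = true then (1:ℤ) else 0) - 2*(if σ (x+e) = true then (1:ℤ) else 0) + 1 := by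
      intro x; cases hx : σ x <;> cases hy : σ (x+e) <;> simp [spin, hx, hy]
    rw [Finset.sum_congr rfl (fun x _ => h1 x)]
    have hshift : (∑ x : Site L M, (if σ (x+e) = true then (1:ℤ) else 0))
        = ∑ x : Site L M, (if σ x = true then (1:ℤ) else 0) :=
      Fintype.sum_equiv (Equiv.addRight e)
        (fun x => if σ (x+e) = true then (1:ℤ) else 0)
        (fun x => if σ x = true then (1:ℤ) else 0) (fun x => rfl)
    have hsb : (∑ x : Site L M, (if σ x = true then (1:ℤ) else 0)) = A := by
      rw [hA]; exact Finset.sum_boole _ _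
    have hsb4 : (∑ x : Site L M, (if σ x = true ∧ σ (x+e) = true then (4:ℤ) else 0))
        = 4 * ((univ.filter fun x : Site L M => σ x = true ∧ σ (x+e) = true).card : ℤ) := by
      rw [← Finset.sum_boole (fun x : Site L M => σ x = true ∧ σ (x+e) = true) univ,
        Finset.mul_sum]
      exact Finset.sum_congr rfl (fun x _ => by split <;> norm_num)
    simp only [Finset.sum_add_distrib, Finset.sum_sub_distrib, ← Finset.mul_sum,
      hshift, hsb, hsb4, Finset.sum_const, Finset.card_univ, nsmul_eq_mul, mul_one]
    rw [hN]
    ring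
  have e1 : (∑ x : Site L M,
        ((spin (σ x) * spin (σ (x + (1,0))) + spin (σ x) * spin (σ (x + (0,1))) : ℤ) : ℝ))
      = (((4*C1 - 4*A + N) + (4*C2 - 4*A + N) : ℤ) : ℝ) := by
    rw [← Int.cast_sum]
    congr 1
    rw [Finset.sum_add_distrib, key (1,0), key (0,1), hC1, hC2]
  have e2 : (∑ x : Site L M, ((spin (σ x) : ℤ) : ℝ)) = (((2*A - N : ℤ)) : ℝ) := by
    rw [← Int.cast_sum]
    congr 1
    have h1 : ∀ x : Site L M, spin (σ x) = 2*(if σ x = true then (1:ℤ) else 0) - 1 := by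
      intro x; cases hx : σ x <;> simp [spin, hx]
    rw [Finset.sum_congr rfl (fun x _ => h1 x)]
    simp only [Finset.sum_sub_distrib, ← Finset.mul_sum, Finset.sum_boole, Finset.sum_const,
      Finset.card_univ, nsmul_eq_mul, mul_one]
    rw [hA, hN]
  have e3 : (∑ x : Site L M,
        ((spin (allMinus L M x) * spin (allMinus L M (x + (1,0)))
          + spin (allMinus L M x) * spin (allMinus L M (x + (0,1))) : ℤ) : ℝ))
      = ((2*N : ℤ) : ℝ) := by
    rw [← Int.cast_sum]
    congr 1
    simp [allMinus, spin, Finset.sum_const, Finset.card_univ, hN]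
    ring
  have e4 : (∑ x : Site L M, ((spin (allMinus L M x) : ℤ) : ℝ)) = ((-N : ℤ) : ℝ) := by
    rw [← Int.cast_sum]
    congr 1
    simp [allMinus, spin, Finset.sum_const, Finset.card_univ, hN]
  simp only [ham, e1, e2, e3, e4]
  rw [hA, hC1, hC2]
  push_cast
  ring

end Aux


section Count

variable {L M : ℕ} [NeZero L] [NeZero M] {n : ℕ}

lemma sigma_val (hn : 1 ≤ n) (hL : n + 2 ≤ 2*L) (hM : n + 2 ≤ 2*M) (x : Site L M) :
    (flipC (rectConf L M n (n-1)) {((0 : ZMod (2*L)), ((n-1 : ℕ) : ZMod (2*M)))} x = true)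
      ↔ ((x.1.val < n ∧ x.2.val < n-1) ∨ (x.1.val = 0 ∧ x.2.val = n-1)) := by
  have hv2 : ((n-1 : ℕ) : ZMod (2*M)).val = n-1 := ZMod.val_cast_of_lt (by omega)
  have hmem : x ∈ ({((0 : ZMod (2*L)), ((n-1 : ℕ) : ZMod (2*M)))} : Finset (Site L M))
      ↔ (x.1.val = 0 ∧ x.2.val = n-1) := by
    rw [Finset.mem_singleton, Prod.ext_iff]
    constructor
    · rintro ⟨h1, h2⟩
      exact ⟨by rw [h1]; exact ZMod.val_zero, by rw [h2, hv2]⟩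
    · rintro ⟨h1, h2⟩
      exact ⟨(ZMod.val_eq_zero _).1 h1, ZMod.val_injective _ (by rw [h2, hv2])⟩
  have hrect : (rectConf L M n (n-1) x = true) ↔ (x.1.val < n ∧ x.2.val < n-1) := by
    simp only [rectConf, decide_eq_true_eq]
    constructor
    · rintro ⟨i, hi, j, hj, hx⟩
      rw [hx]
      simp only
      rw [ZMod.val_cast_of_lt (by omega), ZMod.val_cast_of_lt (by omega)]
      exact ⟨hi, hj⟩
    · rintro ⟨h1, h2⟩
      refine ⟨x.1.val, h1, x.2.val, h2, ?_⟩
      rw [Prod.ext_iff]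
      exact ⟨(ZMod.natCast_rightInverse x.1).symm, (ZMod.natCast_rightInverse x.2).symm⟩
  simp only [flipC]
  by_cases hx : x ∈ ({((0 : ZMod (2*L)), ((n-1 : ℕ) : ZMod (2*M)))} : Finset (Site L M))
  · rw [if_pos hx]
    rw [hmem] at hx
    have hrf : rectConf L M n (n-1) x = false := by
      rw [← Bool.not_eq_true, hrect]
      omega
    rw [hrf]
    simp only [Bool.not_false, true_iff]
    exact Or.inr hx
  · rw [if_neg hx, hrect]
    rw [hmem] at hx
    constructor
    · exact Or.inl
    · rintro (h | h)
      · exact h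
      · exact absurd h hx

lemma card_filter_val (P : Site L M → Prop) [DecidablePred P] (T : Finset (ℕ × ℕ))
    (hd1 : ∀ q ∈ T, q.1 < 2*L) (hd2 : ∀ q ∈ T, q.2 < 2*M)
    (hiff : ∀ x : Site L M, P x ↔ (x.1.val, x.2.val) ∈ T) :
    (univ.filter P).card = T.card := by
  apply Finset.card_bij (fun (x : Site L M) _ => (x.1.val, x.2.val))
  · intro x hx
    exact (hiff x).1 (Finset.mem_filter.1 hx).2
  · intro a _ b _ hab
    obtain ⟨h1, h2⟩ := Prod.ext_iff.1 hab
    exact Prod.ext (ZMod.val_injective _ h1) (ZMod.val_injective _ h2)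
  · rintro ⟨b1, b2⟩ hb
    refine ⟨((b1 : ZMod (2*L)), (b2 : ZMod (2*M))), ?_, ?_⟩
    · rw [Finset.mem_filter]
      refine ⟨Finset.mem_univ _, (hiff _).2 ?_⟩
      simp only
      rw [ZMod.val_cast_of_lt (hd1 _ hb), ZMod.val_cast_of_lt (hd2 _ hb)]
      exact hb
    · simp only
      rw [ZMod.val_cast_of_lt (hd1 _ hb), ZMod.val_cast_of_lt (hd2 _ hb)]

lemma cardA (hn : 1 ≤ n) (hL : n + 2 ≤ 2*L) (hM : n + 2 ≤ 2*M) :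
    (univ.filter fun x : Site L M =>
        flipC (rectConf L M n (n-1)) {((0 : ZMod (2*L)), ((n-1 : ℕ) : ZMod (2*M)))} x
          = true).card = n*(n-1)+1 := by
  rw [card_filter_val _ ((range n ×ˢ range (n-1)) ∪ {(0, n-1)})
      (by rintro ⟨q1, q2⟩ hq; simp only [mem_union, mem_product, mem_range,
        mem_singleton, Prod.ext_iff] at hq; omega)
      (by rintro ⟨q1, q2⟩ hq; simp only [mem_union, mem_product, mem_range,
        mem_singleton, Prod.ext_iff] at hq; omega)
      (fun x => by
        rw [sigma_val hn hL hM x]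
        simp only [mem_union, mem_product, mem_range, mem_singleton, Prod.ext_iff])]
  rw [Finset.card_union_of_disjoint (by
    simp only [Finset.disjoint_singleton_right, mem_product, mem_range]
    omega)]
  rw [Finset.card_product, Finset.card_range, Finset.card_range, Finset.card_singleton]

lemma cardC1 (hn : 1 ≤ n) (hL : n + 2 ≤ 2*L) (hM : n + 2 ≤ 2*M) :
    (univ.filter fun x : Site L M =>
        flipC (rectConf L M n (n-1)) {((0 : ZMod (2*L)), ((n-1 : ℕ) : ZMod (2*M)))} x = true
        ∧ flipC (rectConf L M n (n-1)) {((0 : ZMod (2*L)), ((n-1 : ℕ) : ZMod (2*M)))} (x+(1,0))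
          = true).card = (n-1)*(n-1) := by
  rw [card_filter_val _ (range (n-1) ×ˢ range (n-1))
      (by rintro ⟨q1, q2⟩ hq; simp only [mem_product, mem_range] at hq; omega)
      (by rintro ⟨q1, q2⟩ hq; simp only [mem_product, mem_range] at hq; omega)
      (fun x => by
        have hy1 : (x + ((1,0) : Site L M)).1 = x.1 + 1 := by
          rw [Prod.fst_add]
        have hy2 : (x + ((1,0) : Site L M)).2 = x.2 := by
          rw [Prod.snd_add]; exact add_zero _
        rw [sigma_val hn hL hM x, sigma_val hn hL hM (x + (1,0))]
        simp only [hy1, hy2, mem_product, mem_range]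
        constructor
        · rintro ⟨h1, h2⟩
          have hb : x.1.val + 1 < 2*L := by omega
          rw [val_add_one' hb] at h2
          omega
        · intro hx
          have hb : x.1.val + 1 < 2*L := by omega
          rw [val_add_one' hb]
          omega)]
  rw [Finset.card_product, Finset.card_range]

lemma cardC2 (h2 : 2 ≤ n) (hL : n + 2 ≤ 2*L) (hM : n + 2 ≤ 2*M) :
    (univ.filter fun x : Site L M =>
        flipC (rectConf L M n (n-1)) {((0 : ZMod (2*L)), ((n-1 : ℕ) : ZMod (2*M)))} x = true
        ∧ flipC (rectConf L M n (n-1)) {((0 : ZMod (2*L)), ((n-1 : ℕ) : ZMod (2*M)))} (x+(0,1))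
          = true).card = n*(n-2)+1 := by
  have hn : 1 ≤ n := by omega
  rw [card_filter_val _ ((range n ×ˢ range (n-2)) ∪ {(0, n-2)})
      (by rintro ⟨q1, q2⟩ hq; simp only [mem_union, mem_product, mem_range,
        mem_singleton, Prod.ext_iff] at hq; omega)
      (by rintro ⟨q1, q2⟩ hq; simp only [mem_union, mem_product, mem_range,
        mem_singleton, Prod.ext_iff] at hq; omega)
      (fun x => by
        have hy1 : (x + ((0,1) : Site L M)).1 = x.1 := by
          rw [Prod.fst_add]; exact add_zero _
        have hy2 : (x + ((0,1) : Site L M)).2 = x.2 + 1 := by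
          rw [Prod.snd_add]
        rw [sigma_val hn hL hM x, sigma_val hn hL hM (x + (0,1))]
        simp only [hy1, hy2, mem_union, mem_product, mem_range, mem_singleton, Prod.ext_iff]
        constructor
        · rintro ⟨h1, h2⟩
          have hb : x.2.val + 1 < 2*M := by omega
          rw [val_add_one' hb] at h2
          omega
        · intro hx
          have hb : x.2.val + 1 < 2*M := by omega
          rw [val_add_one' hb]
          omega)]
  rw [Finset.card_union_of_disjoint (by
    simp only [Finset.disjoint_singleton_right, mem_product, mem_range]
    omega)]
  rw [Finset.card_product, Finset.card_range, Finset.card_range, Finset.card_singleton]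

lemma cardC2_one (hn : n = 1) (hL : n + 2 ≤ 2*L) (hM : n + 2 ≤ 2*M) :
    (univ.filter fun x : Site L M =>
        flipC (rectConf L M n (n-1)) {((0 : ZMod (2*L)), ((n-1 : ℕ) : ZMod (2*M)))} x = true
        ∧ flipC (rectConf L M n (n-1)) {((0 : ZMod (2*L)), ((n-1 : ℕ) : ZMod (2*M)))} (x+(0,1))
          = true).card = 0 := by
  rw [Finset.card_eq_zero, Finset.filter_eq_empty_iff]
  intro x _
  rintro ⟨h1, h2⟩
  have hy1 : (x + ((0,1) : Site L M)).1 = x.1 := by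
    rw [Prod.fst_add]; exact add_zero _
  have hy2 : (x + ((0,1) : Site L M)).2 = x.2 + 1 := by
    rw [Prod.snd_add]
  rw [sigma_val (by omega) hL hM x] at h1
  rw [sigma_val (by omega) hL hM (x + (0,1))] at h2
  rw [hy1, hy2] at h2
  have hb : x.2.val + 1 < 2*M := by omega
  rw [val_add_one' hb] at h2
  omega

end Count

/-- energy of the critical droplet (an ℓ*×(ℓ*−1) rectangle of pluses with a
unit protuberance on a longest side) relative to the all-minus configuration. -/
theorem critical_droplet_energy {L M : ℕ} [NeZero L] [NeZero M]
    (J h : ℝ) (hJ : 0 < J) (hh : 0 < h)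
    (hL : lstar J h + 2 ≤ 2*L) (hM : lstar J h + 2 ≤ 2*M) :
    ham J h (flipC (rectConf L M (lstar J h) (lstar J h - 1))
        {((0 : ZMod (2*L)), ((lstar J h - 1 : ℕ) : ZMod (2*M)))})
      - ham J h (allMinus L M)
      = 4*J*(lstar J h : ℝ) - h*((lstar J h : ℝ)^2 - (lstar J h : ℝ) + 1) := by
  have hn : 1 ≤ lstar J h := by unfold lstar; omega
  rw [ham_diff, cardA hn hL hM, cardC1 hn hL hM]
  rcases Nat.lt_or_ge (lstar J h) 2 with h2 | h2
  · have hn1 : lstar J h = 1 := by omega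
    rw [cardC2_one hn1 hL hM, hn1]
    norm_num
  · rw [cardC2 h2 hL hM]
    have c1 : ((lstar J h - 1 : ℕ) : ℝ) = (lstar J h : ℝ) - 1 := by
      push_cast [Nat.cast_sub hn]; ring
    have c2 : ((lstar J h - 2 : ℕ) : ℝ) = (lstar J h : ℝ) - 2 := by
      push_cast [Nat.cast_sub h2]; ring
    push_cast [c1, c2]
    ring
end

section
/- The two-step transition kernel P(ξ,η) = Σ_ζ p_e(ξ,ζ) p_o(ζ,η) of the alternate dynamics is irreducible: for any two configurations ξ, η there is n with Pⁿ(ξ,η) > 0; consequently the Gibbs measure is its unique invariant measure. -/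
open Finset

noncomputable def gibbs {L M : ℕ} [NeZero L] [NeZero M] (J h β : ℝ) (σ : Config L M) : ℝ :=
  Real.exp (-β * ham J h σ) / ∑ η : Config L M, Real.exp (-β * ham J h η)

def diffSet {L M : ℕ} [NeZero L] [NeZero M] (ξ η : Config L M) : Finset (Site L M) :=
  univ.filter fun x => ξ x ≠ η x

noncomputable def offDiag {L M : ℕ} [NeZero L] [NeZero M] (J h β : ℝ)
    (μ : Finset (Site L M) → ℝ) (S : Finset (Site L M)) (ξ η : Config L M) : ℝ :=
  if (diffSet ξ η).Nonempty ∧ diffSet ξ η ⊆ S then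
    μ (diffSet ξ η) * Real.exp (-β * max (ham J h η - ham J h ξ) 0)
  else 0

noncomputable def kernel {L M : ℕ} [NeZero L] [NeZero M] (J h β : ℝ)
    (μ : Finset (Site L M) → ℝ) (S : Finset (Site L M)) (ξ η : Config L M) : ℝ :=
  if ξ = η then 1 - ∑ ζ ∈ univ.erase ξ, offDiag J h β μ S ξ ζ
  else offDiag J h β μ S ξ η
/-- One full step of the alternate dynamics: an even-sublattice update followed by an
odd-sublattice update. -/
noncomputable def stepK {L M : ℕ} [NeZero L] [NeZero M] (J h β : ℝ)
    (μe μo : Finset (Site L M) → ℝ) (ξ η : Config L M) : ℝ :=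
  ∑ ζ : Config L M, kernel J h β μe (evens L M) ξ ζ * kernel J h β μo (odds L M) ζ η

/-- n-fold iterate of the two-step kernel. -/
noncomputable def iterK {L M : ℕ} [NeZero L] [NeZero M] (J h β : ℝ)
    (μe μo : Finset (Site L M) → ℝ) : ℕ → Config L M → Config L M → ℝ
  | 0, ξ, η => if ξ = η then 1 else 0
  | n+1, ξ, η => ∑ ζ : Config L M, iterK J h β μe μo n ξ ζ * stepK J h β μe μo ζ η

open scoped symmDiff

section aux
variable {L M : ℕ} [NeZero L] [NeZero M]

@[simp] lemma mem_diffSet {ξ η : Config L M} {x : Site L M} :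
    x ∈ diffSet ξ η ↔ ξ x ≠ η x := by simp [diffSet]

lemma diffSet_comm (ξ η : Config L M) : diffSet ξ η = diffSet η ξ := by
  ext x; simp [ne_comm]

@[simp] lemma diffSet_self (ξ : Config L M) : diffSet ξ ξ = ∅ := by
  ext x; simp

lemma diffSet_eq_empty_iff {ξ η : Config L M} : diffSet ξ η = ∅ ↔ ξ = η := by
  constructor
  · intro hd; funext x
    by_contra hx
    have : x ∈ diffSet ξ η := mem_diffSet.2 hx
    simp [hd] at this
  · rintro rfl; simp

lemma diffSet_nonempty_of_ne {ξ η : Config L M} (h : ξ ≠ η) : (diffSet ξ η).Nonempty := by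
  rw [Finset.nonempty_iff_ne_empty]
  exact fun he => h (diffSet_eq_empty_iff.1 he)

@[simp] lemma diffSet_flipC (ξ : Config L M) (I : Finset (Site L M)) :
    diffSet ξ (flipC ξ I) = I := by
  ext x
  by_cases hx : x ∈ I <;> simp [flipC, hx]

lemma diffSet_flip_left (σ τ : Config L M) (A : Finset (Site L M)) :
    diffSet (flipC σ A) τ = A ∆ diffSet σ τ := by
  ext x
  by_cases hx : x ∈ A <;>
    simp [flipC, hx, Finset.mem_symmDiff]

lemma flipC_diffSet (σ τ : Config L M) : flipC σ (diffSet σ τ) = τ := by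
  funext x
  by_cases hx : σ x = τ x
  · simp [flipC, hx]
  · simp only [flipC, mem_diffSet, ne_eq, hx, not_false_eq_true, if_true]
    cases hσ : σ x <;> cases hτ : τ x <;> simp_all

lemma flipC_ne_of_nonempty (σ : Config L M) {I : Finset (Site L M)} (hI : I.Nonempty) :
    flipC σ I ≠ σ := by
  intro he
  have := diffSet_flipC σ I
  rw [he] at this
  simp at this
  rw [← this] at hI
  exact Finset.not_nonempty_empty hI

end aux
section evensodds
variable (L M : ℕ) [NeZero L] [NeZero M]

lemma evens_union_odds : evens L M ∪ odds L M = univ := by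
  ext x; simp [evens, odds]; exact Nat.even_or_odd _

lemma evens_disjoint_odds : Disjoint (evens L M) (odds L M) := by
  rw [Finset.disjoint_left]
  intro x hx hx'
  simp [evens, odds] at hx hx'
  exact (Nat.not_odd_iff_even.mpr hx) hx'

lemma two_mem_evens : ∃ a b : Site L M, a ∈ evens L M ∧ b ∈ evens L M ∧ a ≠ b := by
  haveI : Fact (1 < 2*L) := ⟨by have := Nat.pos_of_ne_zero (NeZero.ne L); omega⟩
  haveI : Fact (1 < 2*M) := ⟨by have := Nat.pos_of_ne_zero (NeZero.ne M); omega⟩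
  refine ⟨(0,0), (1,1), ?_, ?_, ?_⟩
  · simp [evens]
  · simp [evens, ZMod.val_one]
  · intro he
    have : (0 : ZMod (2*L)) = 1 := congrArg Prod.fst he
    exact zero_ne_one this

lemma two_mem_odds : ∃ a b : Site L M, a ∈ odds L M ∧ b ∈ odds L M ∧ a ≠ b := by
  haveI : Fact (1 < 2*L) := ⟨by have := Nat.pos_of_ne_zero (NeZero.ne L); omega⟩
  haveI : Fact (1 < 2*M) := ⟨by have := Nat.pos_of_ne_zero (NeZero.ne M); omega⟩
  refine ⟨(0,1), (1,0), ?_, ?_, ?_⟩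
  · simp [odds, ZMod.val_one]
  · simp [odds, ZMod.val_one]
  · intro he
    have : (0 : ZMod (2*L)) = 1 := congrArg Prod.fst he
    exact zero_ne_one this

/-- Given `D ⊆ S` and two distinct elements of `S`, there is a nonempty `E ⊆ S` with
`E ∆ D` nonempty. -/
lemma exists_good_flip {α : Type*} [DecidableEq α] {S D : Finset α} (hD : D ⊆ S)
    (a b : α) (ha : a ∈ S) (hb : b ∈ S) (hab : a ≠ b) :
    ∃ E : Finset α, E.Nonempty ∧ E ⊆ S ∧ (E ∆ D).Nonempty := by
  by_cases hDS : D = S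
  · refine ⟨{a}, Finset.singleton_nonempty a, by simpa using ha, ⟨b, ?_⟩⟩
    rw [Finset.mem_symmDiff]
    right
    exact ⟨hDS ▸ hb, by simp [hab.symm]⟩
  · obtain ⟨x, hxS, hxD⟩ := Finset.exists_of_ssubset (lt_of_le_of_ne hD hDS)
    refine ⟨{x}, Finset.singleton_nonempty x, by simpa using hxS, ⟨x, ?_⟩⟩
    rw [Finset.mem_symmDiff]
    left
    exact ⟨by simp, hxD⟩

end evensodds
section kernelfacts
variable {L M : ℕ} [NeZero L] [NeZero M] (J h β : ℝ)
variable {μ : Finset (Site L M) → ℝ} {S : Finset (Site L M)}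

lemma offDiag_nonneg (hpos : ∀ I, I.Nonempty → I ⊆ S → 0 < μ I) (ξ η : Config L M) :
    0 ≤ offDiag J h β μ S ξ η := by
  rw [_root_.offDiag]
  split
  · next hc => exact mul_nonneg (hpos _ hc.1 hc.2).le (Real.exp_pos _).le
  · exact le_rfl

lemma offDiag_pos (hpos : ∀ I, I.Nonempty → I ⊆ S → 0 < μ I) {ξ η : Config L M}
    (hne : (diffSet ξ η).Nonempty) (hsub : diffSet ξ η ⊆ S) :
    0 < offDiag J h β μ S ξ η := by
  rw [_root_.offDiag, if_pos ⟨hne, hsub⟩]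
  exact mul_pos (hpos _ hne hsub) (Real.exp_pos _)

lemma sum_offDiag_le (hβ : 0 < β)
    (hpos : ∀ I, I.Nonempty → I ⊆ S → 0 < μ I)
    (hsum : ∑ I ∈ S.powerset.filter (fun I => I.Nonempty), μ I = 1) (ξ : Config L M) :
    ∑ ζ ∈ univ.erase ξ, offDiag J h β μ S ξ ζ ≤ 1 := by
  have h1 : ∀ ζ ∈ univ.erase ξ, offDiag J h β μ S ξ ζ ≠ 0 →
      ((diffSet ξ ζ).Nonempty ∧ diffSet ξ ζ ⊆ S) := by
    intro ζ _ hne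
    by_contra hc
    exact hne (by rw [_root_.offDiag, if_neg hc])
  rw [← Finset.sum_filter_of_ne h1]
  have h2 : ∑ ζ ∈ (univ.erase ξ).filter
        (fun ζ => (diffSet ξ ζ).Nonempty ∧ diffSet ξ ζ ⊆ S), offDiag J h β μ S ξ ζ
      = ∑ I ∈ S.powerset.filter (fun I => I.Nonempty), offDiag J h β μ S ξ (flipC ξ I) := by
    refine Finset.sum_nbij' (i := fun ζ => diffSet ξ ζ) (j := fun I => flipC ξ I)
      ?_ ?_ ?_ ?_ ?_
    · intro ζ hζ
      simp only [Finset.mem_filter, Finset.mem_powerset] at hζ ⊢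
      exact ⟨hζ.2.2, hζ.2.1⟩
    · intro I hI
      simp only [Finset.mem_filter, Finset.mem_powerset] at hI ⊢
      refine ⟨Finset.mem_erase.2 ⟨flipC_ne_of_nonempty ξ hI.2, Finset.mem_univ _⟩, ?_⟩
      rw [diffSet_flipC]
      exact ⟨hI.2, hI.1⟩
    · intro ζ _
      exact flipC_diffSet ξ ζ
    · intro I _
      exact diffSet_flipC ξ I
    · intro ζ _
      rw [flipC_diffSet]
  rw [h2, ← hsum]
  apply Finset.sum_le_sum
  intro I hI
  simp only [Finset.mem_filter, Finset.mem_powerset] at hI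
  rw [_root_.offDiag, diffSet_flipC, if_pos ⟨hI.2, hI.1⟩]
  have hμI := (hpos I hI.2 hI.1).le
  calc μ I * Real.exp (-β * max (ham J h (flipC ξ I) - ham J h ξ) 0)
      ≤ μ I * 1 := by
        apply mul_le_mul_of_nonneg_left _ hμI
        rw [Real.exp_le_one_iff]
        have : 0 ≤ max (ham J h (flipC ξ I) - ham J h ξ) 0 := le_max_right _ _
        nlinarith
    _ = μ I := mul_one _

lemma kernel_nonneg (hβ : 0 < β)
    (hpos : ∀ I, I.Nonempty → I ⊆ S → 0 < μ I)
    (hsum : ∑ I ∈ S.powerset.filter (fun I => I.Nonempty), μ I = 1) (ξ η : Config L M) :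
    0 ≤ kernel J h β μ S ξ η := by
  rw [kernel]
  split
  · next he => linarith [sum_offDiag_le J h β hβ hpos hsum ξ]
  · exact offDiag_nonneg J h β hpos ξ η

lemma kernel_pos (hpos : ∀ I, I.Nonempty → I ⊆ S → 0 < μ I) {ξ η : Config L M}
    (hne : (diffSet ξ η).Nonempty) (hsub : diffSet ξ η ⊆ S) :
    0 < kernel J h β μ S ξ η := by
  have hξη : ξ ≠ η := by
    intro he
    subst he
    simp [Finset.nonempty_iff_ne_empty] at hne
  rw [kernel, if_neg hξη]
  exact offDiag_pos J h β hpos hne hsub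

lemma kernel_rowsum (ξ : Config L M) : ∑ η : Config L M, kernel J h β μ S ξ η = 1 := by
  rw [← Finset.add_sum_erase _ _ (Finset.mem_univ ξ)]
  have hdiag : kernel J h β μ S ξ ξ = 1 - ∑ ζ ∈ univ.erase ξ, offDiag J h β μ S ξ ζ := by
    rw [kernel, if_pos rfl]
  have hoff : ∑ η ∈ univ.erase ξ, kernel J h β μ S ξ η
      = ∑ ζ ∈ univ.erase ξ, offDiag J h β μ S ξ ζ := by
    apply Finset.sum_congr rfl
    intro η hη
    rw [kernel, if_neg (Ne.symm (Finset.mem_erase.1 hη).1)]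
  rw [hdiag, hoff]
  ring

end kernelfacts
section gibbsfacts
variable {L M : ℕ} [NeZero L] [NeZero M] (J h β : ℝ)
variable {μ : Finset (Site L M) → ℝ} {S : Finset (Site L M)}

lemma partition_pos : 0 < ∑ η : Config L M, Real.exp (-β * ham J h η) :=
  Finset.sum_pos (fun η _ => Real.exp_pos _) Finset.univ_nonempty

lemma gibbs_pos (σ : Config L M) : 0 < gibbs J h β σ :=
  div_pos (Real.exp_pos _) (partition_pos J h β)

lemma gibbs_sum : ∑ σ : Config L M, gibbs J h β σ = 1 := by
  simp only [gibbs]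
  rw [← Finset.sum_div]
  exact div_self (partition_pos J h β).ne'

lemma detailed_balance (ξ η : Config L M) :
    gibbs J h β ξ * kernel J h β μ S ξ η = gibbs J h β η * kernel J h β μ S η ξ := by
  by_cases hξη : ξ = η
  · subst hξη; rfl
  · rw [kernel, if_neg hξη, kernel, if_neg (Ne.symm hξη)]
    rw [_root_.offDiag, _root_.offDiag, diffSet_comm η ξ]
    by_cases hc : (diffSet ξ η).Nonempty ∧ diffSet ξ η ⊆ S
    · rw [if_pos hc, if_pos hc]
      have key : Real.exp (-β * ham J h ξ) * Real.exp (-β * max (ham J h η - ham J h ξ) 0)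
          = Real.exp (-β * ham J h η) * Real.exp (-β * max (ham J h ξ - ham J h η) 0) := by
        rw [← Real.exp_add, ← Real.exp_add]
        congr 1
        rcases le_total (ham J h ξ) (ham J h η) with hle | hle
        · rw [max_eq_left (by linarith), max_eq_right (by linarith)]
          ring
        · rw [max_eq_right (by linarith), max_eq_left (by linarith)]
          ring
      simp only [gibbs]
      rw [div_mul_eq_mul_div, div_mul_eq_mul_div]
      congr 1
      linear_combination μ (diffSet ξ η) * key
    · rw [if_neg hc, if_neg hc, mul_zero, mul_zero]

lemma gibbs_kernel_invariant (η : Config L M) :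
    ∑ ξ : Config L M, gibbs J h β ξ * kernel J h β μ S ξ η = gibbs J h β η := by
  calc ∑ ξ : Config L M, gibbs J h β ξ * kernel J h β μ S ξ η
      = ∑ ξ : Config L M, gibbs J h β η * kernel J h β μ S η ξ := by
        exact Finset.sum_congr rfl fun ξ _ => detailed_balance J h β ξ η
    _ = gibbs J h β η * ∑ ξ : Config L M, kernel J h β μ S η ξ := by
        rw [Finset.mul_sum]
    _ = gibbs J h β η := by rw [kernel_rowsum (μ := μ) (S := S) J h β η, mul_one]

end gibbsfacts
section stepfacts
variable {L M : ℕ} [NeZero L] [NeZero M] (J h β : ℝ)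
variable {μe μo : Finset (Site L M) → ℝ}

lemma stepK_nonneg (hβ : 0 < β)
    (hμe : ∀ I, I.Nonempty → I ⊆ evens L M → 0 < μe I)
    (hμesum : ∑ I ∈ (evens L M).powerset.filter (fun I => I.Nonempty), μe I = 1)
    (hμo : ∀ I, I.Nonempty → I ⊆ odds L M → 0 < μo I)
    (hμosum : ∑ I ∈ (odds L M).powerset.filter (fun I => I.Nonempty), μo I = 1)
    (ξ η : Config L M) : 0 ≤ stepK J h β μe μo ξ η :=
  Finset.sum_nonneg fun ζ _ => mul_nonneg
    (kernel_nonneg J h β hβ hμe hμesum ξ ζ) (kernel_nonneg J h β hβ hμo hμosum ζ η)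

lemma stepK_pos (hβ : 0 < β)
    (hμe : ∀ I, I.Nonempty → I ⊆ evens L M → 0 < μe I)
    (hμesum : ∑ I ∈ (evens L M).powerset.filter (fun I => I.Nonempty), μe I = 1)
    (hμo : ∀ I, I.Nonempty → I ⊆ odds L M → 0 < μo I)
    (hμosum : ∑ I ∈ (odds L M).powerset.filter (fun I => I.Nonempty), μo I = 1)
    {σ τ : Config L M} {E O : Finset (Site L M)}
    (hE : E.Nonempty) (hEs : E ⊆ evens L M) (hO : O.Nonempty) (hOs : O ⊆ odds L M)
    (hd : diffSet σ τ = E ∆ O) : 0 < stepK J h β μe μo σ τ := by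
  set ζ := flipC σ E with hζ
  have h1 : diffSet σ ζ = E := diffSet_flipC σ E
  have h2 : diffSet ζ τ = O := by
    rw [hζ, diffSet_flip_left, hd, ← symmDiff_assoc, symmDiff_self, bot_symmDiff]
  have hpos : 0 < kernel J h β μe (evens L M) σ ζ * kernel J h β μo (odds L M) ζ τ :=
    mul_pos (kernel_pos J h β hμe (h1 ▸ hE) (h1 ▸ hEs))
      (kernel_pos J h β hμo (h2 ▸ hO) (h2 ▸ hOs))
  have hle : kernel J h β μe (evens L M) σ ζ * kernel J h β μo (odds L M) ζ τ
      ≤ stepK J h β μe μo σ τ :=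
    Finset.single_le_sum (f := fun ζ' => kernel J h β μe (evens L M) σ ζ' *
        kernel J h β μo (odds L M) ζ' τ)
      (fun ζ' _ => mul_nonneg (kernel_nonneg J h β hβ hμe hμesum σ ζ')
        (kernel_nonneg J h β hβ hμo hμosum ζ' τ)) (Finset.mem_univ ζ)
  linarith

lemma gibbs_stepK_invariant (η : Config L M) :
    ∑ ξ : Config L M, gibbs J h β ξ * stepK J h β μe μo ξ η = gibbs J h β η := by
  calc ∑ ξ : Config L M, gibbs J h β ξ * stepK J h β μe μo ξ η
      = ∑ ξ : Config L M, ∑ ζ : Config L M,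
          gibbs J h β ξ * kernel J h β μe (evens L M) ξ ζ * kernel J h β μo (odds L M) ζ η := by
        simp only [stepK, Finset.mul_sum, mul_assoc]
    _ = ∑ ζ : Config L M, (∑ ξ : Config L M,
          gibbs J h β ξ * kernel J h β μe (evens L M) ξ ζ) * kernel J h β μo (odds L M) ζ η := by
        rw [Finset.sum_comm]
        simp only [Finset.sum_mul]
    _ = ∑ ζ : Config L M, gibbs J h β ζ * kernel J h β μo (odds L M) ζ η := by
        refine Finset.sum_congr rfl fun ζ _ => ?_
        rw [gibbs_kernel_invariant]
    _ = gibbs J h β η := gibbs_kernel_invariant J h β η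

lemma iterK_nonneg (hβ : 0 < β)
    (hμe : ∀ I, I.Nonempty → I ⊆ evens L M → 0 < μe I)
    (hμesum : ∑ I ∈ (evens L M).powerset.filter (fun I => I.Nonempty), μe I = 1)
    (hμo : ∀ I, I.Nonempty → I ⊆ odds L M → 0 < μo I)
    (hμosum : ∑ I ∈ (odds L M).powerset.filter (fun I => I.Nonempty), μo I = 1)
    (n : ℕ) (ξ η : Config L M) : 0 ≤ iterK J h β μe μo n ξ η := by
  induction n generalizing ξ η with
  | zero => rw [iterK]; split <;> norm_num
  | succ n ih =>
      rw [iterK]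
      exact Finset.sum_nonneg fun ζ _ => mul_nonneg (ih ξ ζ)
        (stepK_nonneg J h β hβ hμe hμesum hμo hμosum ζ η)

lemma iterK_one (ξ η : Config L M) : iterK J h β μe μo 1 ξ η = stepK J h β μe μo ξ η := by
  rw [iterK]
  rw [Finset.sum_eq_single ξ]
  · rw [iterK, if_pos rfl, one_mul]
  · intro ζ _ hζ
    rw [iterK, if_neg (Ne.symm hζ), zero_mul]
  · intro hξ
    exact absurd (Finset.mem_univ ξ) hξ

lemma invariant_iterK (π : Config L M → ℝ)
    (hπ : ∀ η : Config L M, ∑ ξ : Config L M, π ξ * stepK J h β μe μo ξ η = π η)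
    (n : ℕ) (η : Config L M) :
    ∑ ξ : Config L M, π ξ * iterK J h β μe μo n ξ η = π η := by
  induction n generalizing η with
  | zero =>
      rw [Finset.sum_eq_single η]
      · rw [iterK, if_pos rfl, mul_one]
      · intro ζ _ hζ
        rw [iterK, if_neg hζ, mul_zero]
      · intro hη
        exact absurd (Finset.mem_univ η) hη
  | succ n ih =>
      calc ∑ ξ : Config L M, π ξ * iterK J h β μe μo (n+1) ξ η
          = ∑ ξ : Config L M, ∑ ζ : Config L M,
              π ξ * iterK J h β μe μo n ξ ζ * stepK J h β μe μo ζ η := by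
            simp only [iterK, Finset.mul_sum, mul_assoc]
        _ = ∑ ζ : Config L M, (∑ ξ : Config L M,
              π ξ * iterK J h β μe μo n ξ ζ) * stepK J h β μe μo ζ η := by
            rw [Finset.sum_comm]
            simp only [Finset.sum_mul]
        _ = ∑ ζ : Config L M, π ζ * stepK J h β μe μo ζ η := by
            refine Finset.sum_congr rfl fun ζ _ => ?_
            rw [ih]
        _ = π η := hπ η

end stepfacts
/-- the two-step kernel is irreducible and the Gibbs measure is its
unique invariant probability measure. -/
theorem two_step_kernel_irreducible_unique_invariant {L M : ℕ} [NeZero L] [NeZero M]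
    (J h β : ℝ) (hJ : 0 < J) (hh : 0 < h) (hβ : 0 < β)
    (μe μo : Finset (Site L M) → ℝ)
    (hμe : ∀ I : Finset (Site L M), I.Nonempty → I ⊆ evens L M → 0 < μe I)
    (hμe0 : ∀ I : Finset (Site L M), ¬ (I.Nonempty ∧ I ⊆ evens L M) → μe I = 0)
    (hμesum : ∑ I ∈ (evens L M).powerset.filter (fun I => I.Nonempty), μe I = 1)
    (hμo : ∀ I : Finset (Site L M), I.Nonempty → I ⊆ odds L M → 0 < μo I)
    (hμo0 : ∀ I : Finset (Site L M), ¬ (I.Nonempty ∧ I ⊆ odds L M) → μo I = 0)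
    (hμosum : ∑ I ∈ (odds L M).powerset.filter (fun I => I.Nonempty), μo I = 1) :
    (∀ ξ η : Config L M, ∃ n : ℕ, 0 < iterK J h β μe μo n ξ η) ∧
    (∀ η : Config L M, ∑ ξ : Config L M, gibbs J h β ξ * stepK J h β μe μo ξ η
      = gibbs J h β η) ∧
    (∀ π : Config L M → ℝ, (∀ σ, 0 ≤ π σ) → (∑ σ : Config L M, π σ = 1) →
      (∀ η : Config L M, ∑ ξ : Config L M, π ξ * stepK J h β μe μo ξ η = π η) →
      π = gibbs J h β) := by
  have irr : ∀ ξ η : Config L M, ∃ n : ℕ, 0 < iterK J h β μe μo n ξ η := by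
    intro ξ η
    obtain ⟨a, b, ha, hb, hab⟩ := two_mem_evens L M
    obtain ⟨a', b', ha', hb', hab'⟩ := two_mem_odds L M
    have hDe : diffSet ξ η ∩ evens L M ⊆ evens L M := Finset.inter_subset_right
    have hDo : diffSet ξ η ∩ odds L M ⊆ odds L M := Finset.inter_subset_right
    obtain ⟨E1, hE1ne, hE1s, hE2ne⟩ := exists_good_flip hDe a b ha hb hab
    obtain ⟨O1, hO1ne, hO1s, hO2ne⟩ := exists_good_flip hDo a' b' ha' hb' hab'
    set De := diffSet ξ η ∩ evens L M with hDedef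
    set Do := diffSet ξ η ∩ odds L M with hDodef
    set ζ2 := flipC ξ (E1 ∆ O1) with hζ2
    have hs1 : 0 < stepK J h β μe μo ξ ζ2 :=
      stepK_pos J h β hβ hμe hμesum hμo hμosum hE1ne hE1s hO1ne hO1s (diffSet_flipC ξ _)
    have hDeDo : De ∆ Do = diffSet ξ η := by
      have hdisj : Disjoint De Do :=
        (evens_disjoint_odds L M).mono Finset.inter_subset_right Finset.inter_subset_right
      rw [hdisj.symmDiff_eq_sup, Finset.sup_eq_union, hDedef, hDodef,
        ← Finset.inter_union_distrib_left, evens_union_odds, Finset.inter_univ]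
    have hd2 : diffSet ζ2 η = (E1 ∆ De) ∆ (O1 ∆ Do) := by
      rw [hζ2, diffSet_flip_left, ← hDeDo, symmDiff_assoc, symmDiff_assoc,
        symmDiff_left_comm O1]
    have hs2 : 0 < stepK J h β μe μo ζ2 η :=
      stepK_pos J h β hβ hμe hμesum hμo hμosum hE2ne
        (symmDiff_le_sup.trans (sup_le hE1s hDe)) hO2ne
        (symmDiff_le_sup.trans (sup_le hO1s hDo)) hd2
    refine ⟨2, ?_⟩
    have h2eq : iterK J h β μe μo 2 ξ η
        = ∑ ζ : Config L M, iterK J h β μe μo 1 ξ ζ * stepK J h β μe μo ζ η := rfl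
    have hge : iterK J h β μe μo 1 ξ ζ2 * stepK J h β μe μo ζ2 η
        ≤ iterK J h β μe μo 2 ξ η := by
      rw [h2eq]
      exact Finset.single_le_sum
        (f := fun ζ => iterK J h β μe μo 1 ξ ζ * stepK J h β μe μo ζ η)
        (fun ζ _ => mul_nonneg (iterK_nonneg J h β hβ hμe hμesum hμo hμosum 1 ξ ζ)
          (stepK_nonneg J h β hβ hμe hμesum hμo hμosum ζ η)) (Finset.mem_univ ζ2)
    rw [iterK_one] at hge
    nlinarith
  refine ⟨irr, fun η => gibbs_stepK_invariant J h β η, ?_⟩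
  intro π hπ0 hπ1 hπinv
  obtain ⟨σs, -, hmax⟩ := Finset.exists_max_image Finset.univ
    (fun σ => π σ / gibbs J h β σ) Finset.univ_nonempty
  set c := π σs / gibbs J h β σs with hc
  have hgs : ∀ σ : Config L M, 0 < gibbs J h β σ := fun σ => gibbs_pos J h β σ
  have hle : ∀ ξ, π ξ ≤ c * gibbs J h β ξ := by
    intro ξ
    have h1 := hmax ξ (Finset.mem_univ ξ)
    exact (div_le_iff₀ (hgs ξ)).mp h1
  have hcs : c * gibbs J h β σs = π σs := div_mul_cancel₀ (π σs) (hgs σs).ne'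
  have key : ∀ ξ, π ξ = c * gibbs J h β ξ := by
    intro ξ
    obtain ⟨n, hn⟩ := irr ξ σs
    have hπn := invariant_iterK J h β π hπinv n σs
    have hνn := invariant_iterK (μe := μe) (μo := μo) J h β (gibbs J h β)
      (fun η => gibbs_stepK_invariant J h β η) n σs
    have hz : ∑ x : Config L M,
        (c * gibbs J h β x - π x) * iterK J h β μe μo n x σs = 0 := by
      simp only [sub_mul, mul_assoc]
      rw [Finset.sum_sub_distrib, ← Finset.mul_sum, hνn, hπn, hcs, sub_self]
    have hterm := (Finset.sum_eq_zero_iff_of_nonneg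
      (fun x _ => mul_nonneg (by linarith [hle x])
        (iterK_nonneg J h β hβ hμe hμesum hμo hμosum n x σs))).mp hz ξ (Finset.mem_univ ξ)
    rcases mul_eq_zero.mp hterm with h1 | h1
    · linarith
    · exact absurd h1 hn.ne'
  have hc1 : c = 1 := by
    have hsum : ∑ σ : Config L M, π σ = c * ∑ σ : Config L M, gibbs J h β σ := by
      rw [Finset.mul_sum]
      exact Finset.sum_congr rfl fun σ _ => key σ
    rw [hπ1, gibbs_sum, mul_one] at hsum
    exact hsum.symm
  funext σ
  rw [key σ, hc1, one_mul]
end
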